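/- arXiv:1612.06143 — 4 statements merged into one kernel-verified Lean document; each statement's English description precedes it below -/
import Mathlib

section
/- Let Φ be a finite irreducible crystallographic root system with simple system Π and highest root θ = Σ m_α α. If α ∈ Π satisfies m_α = 1, then the principal ideal I = {β ∈ Φ⁺ : α ≤ β} is a maximal abelian ideal of Φ⁺, and equals {β ∈ Φ⁺ : c_α(β) = 1}, where c_α(β) is the coefficient of α in β. -/
local notation "⟪" x ", " y "⟫" => @inner ℝ _ _ x y

/-- A finite (crystallographic) root system in a real inner product space. -/
structure CrystRS (E : Type) [NormedAddCommGroup E] [InnerProductSpace ℝ E] where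
  roots : Set E
  finite : roots.Finite
  nonzero : ∀ β ∈ roots, β ≠ (0 : E)
  neg_mem : ∀ β ∈ roots, -β ∈ roots
  cartan : ∀ β ∈ roots, ∀ γ ∈ roots, ∃ n : ℤ, 2 * ⟪β, γ⟫ = (n : ℝ) * ⟪γ, γ⟫
  reflect : ∀ β ∈ roots, ∀ γ ∈ roots, β - (2 * ⟪β, γ⟫ / ⟪γ, γ⟫) • γ ∈ roots

namespace CrystRS

variable {E : Type} [NormedAddCommGroup E] [InnerProductSpace ℝ E]

/-- Irreducibility: the set of roots admits no nontrivial orthogonal decomposition. -/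
def Irred (R : CrystRS E) : Prop :=
  ∀ A B : Set E, R.roots = A ∪ B → (∀ a ∈ A, ∀ b ∈ B, ⟪a, b⟫ = 0) → A = ∅ ∨ B = ∅

end CrystRS

/-- A root system equipped with a system of simple roots (hence a positive system). -/
structure BasedRS (E : Type) [NormedAddCommGroup E] [InnerProductSpace ℝ E]
    extends CrystRS E where
  simple : Finset E
  simple_sub : (simple : Set E) ⊆ roots
  simple_indep : LinearIndependent ℝ (fun α : {x // x ∈ simple} => (α : E))
  decomp : ∀ β ∈ roots,
    β ∈ AddSubmonoid.closure (simple : Set E) ∨ -β ∈ AddSubmonoid.closure (simple : Set E)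

/-- `γ - β` is a nonnegative integer combination of elements of `P`. -/
def leRel {E : Type} [NormedAddCommGroup E] [InnerProductSpace ℝ E]
    (P : Set E) (β γ : E) : Prop := γ - β ∈ AddSubmonoid.closure P

/-- The indecomposable elements of `P` (the simple roots of a positive system `P`). -/
def SimpleOf {E : Type} [NormedAddCommGroup E] [InnerProductSpace ℝ E]
    (P : Set E) : Set E := {β ∈ P | ∀ γ ∈ P, ∀ δ ∈ P, β ≠ γ + δ}

/-- `C` is an irreducible component of `Ψ`: nonempty, orthogonal to the rest of `Ψ`,
and admitting no further nontrivial orthogonal decomposition. -/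
def IsComponent {E : Type} [NormedAddCommGroup E] [InnerProductSpace ℝ E]
    (Ψ C : Set E) : Prop :=
  C ⊆ Ψ ∧ C.Nonempty ∧ (∀ a ∈ C, ∀ b ∈ Ψ \ C, ⟪a, b⟫ = 0) ∧
    ∀ A B : Set E, C = A ∪ B → (∀ a ∈ A, ∀ b ∈ B, ⟪a, b⟫ = 0) → A = ∅ ∨ B = ∅

namespace BasedRS

variable {E : Type} [NormedAddCommGroup E] [InnerProductSpace ℝ E] (R : BasedRS E)

/-- The positive roots: roots that are nonnegative integer combinations of simple roots. -/
def pos : Set E := {β ∈ R.roots | β ∈ AddSubmonoid.closure (R.simple : Set E)}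

/-- The standard partial order: `γ - β` is a nonnegative integer combination of
simple roots. -/
def le (β γ : E) : Prop := γ - β ∈ AddSubmonoid.closure (R.simple : Set E)

def lt (β γ : E) : Prop := R.le β γ ∧ β ≠ γ

/-- An abelian ideal of the positive system: upward closed, and no two of its
elements sum to a root. -/
def IsAbelianIdeal (I : Set E) : Prop :=
  I ⊆ R.pos ∧ (∀ β ∈ I, ∀ γ ∈ R.pos, R.le β γ → γ ∈ I) ∧
    ∀ β ∈ I, ∀ γ ∈ I, β + γ ∉ R.roots

/-- A short root: of minimal length among the roots. -/
def IsShort (β : E) : Prop := β ∈ R.roots ∧ ∀ γ ∈ R.roots, ‖β‖ ≤ ‖γ‖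

/-- A long root: of maximal length among the roots. -/
def IsLong (β : E) : Prop := β ∈ R.roots ∧ ∀ γ ∈ R.roots, ‖γ‖ ≤ ‖β‖

/-- `θ` is the highest root. -/
def IsHighest (θ : E) : Prop := θ ∈ R.pos ∧ ∀ β ∈ R.roots, R.le β θ

/-- The coefficient of the simple root `α` in `β` equals `1`. -/
def coeffOne (α β : E) : Prop :=
  β - α ∈ Submodule.span ℤ ((R.simple : Set E) \ {α})

end BasedRS

section Aux

variable {E : Type} [NormedAddCommGroup E] [InnerProductSpace ℝ E]

open Classical in
theorem exists_coords (s : Finset E)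
    (hs : LinearIndependent ℝ (fun α : {x // x ∈ s} => (α : E))) :
    ∃ f : E → (E →ₗ[ℝ] ℝ), ∀ γ ∈ s, ∀ γ' ∈ s, f γ γ' = if γ' = γ then 1 else 0 := by
  have hs' : LinearIndepOn ℝ id (↑s : Set E) := hs
  let b := Module.Basis.extend hs'
  have hsub : (↑s : Set E) ⊆ hs'.extend (Set.subset_univ _) := hs'.subset_extend _
  refine ⟨fun γ => if hγ : γ ∈ (↑s : Set E) then b.coord ⟨γ, hsub hγ⟩ else 0, ?_⟩
  intro γ hγ γ' hγ'
  have hγc : γ ∈ (↑s : Set E) := hγ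
  simp only [dif_pos hγc]
  have h1 : γ' = b ⟨γ', hsub hγ'⟩ := (Module.Basis.extend_apply_self hs' ⟨γ', hsub hγ'⟩).symm
  rw [Module.Basis.coord_apply]
  conv_lhs => rw [h1]
  rw [Module.Basis.repr_self_apply]
  simp [Subtype.ext_iff, eq_comm]

theorem root_sub (R : CrystRS E) {x y : E} (hx : x ∈ R.roots) (hy : y ∈ R.roots)
    (hne : x ≠ y) (hpos : 0 < ⟪x, y⟫) : x - y ∈ R.roots := by
  obtain ⟨n, hn⟩ := R.cartan x hx y hy
  obtain ⟨m, hm⟩ := R.cartan y hy x hx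
  have selfpos : ∀ z : E, z ≠ 0 → (0:ℝ) < ⟪z, z⟫ := fun z hz =>
    lt_of_le_of_ne real_inner_self_nonneg (fun h => hz (inner_self_eq_zero.1 h.symm))
  have hyy : 0 < ⟪y, y⟫ := selfpos y (R.nonzero y hy)
  have hxx : 0 < ⟪x, x⟫ := selfpos x (R.nonzero x hx)
  have hcomm : ⟪y, x⟫ = ⟪x, y⟫ := real_inner_comm x y
  have hn1 : 1 ≤ n := by
    have h1 : (0:ℝ) < (n:ℝ) * ⟪y, y⟫ := by rw [← hn]; linarith
    have h2 : (0:ℝ) < (n:ℝ) := by nlinarith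
    exact_mod_cast h2
  have hm1 : 1 ≤ m := by
    have h1 : (0:ℝ) < (m:ℝ) * ⟪x, x⟫ := by rw [← hm, hcomm]; linarith
    have h2 : (0:ℝ) < (m:ℝ) := by nlinarith
    exact_mod_cast h2
  rcases eq_or_lt_of_le hn1 with h1 | h1
  · have := R.reflect x hx y hy
    have hq : 2 * ⟪x, y⟫ / ⟪y, y⟫ = 1 := by
      rw [hn, ← h1]; push_cast; field_simp
    rwa [hq, one_smul] at this
  rcases eq_or_lt_of_le hm1 with h2 | h2
  · have := R.reflect y hy x hx
    have hq : 2 * ⟪y, x⟫ / ⟪x, x⟫ = 1 := by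
      rw [hm, ← h2]; push_cast; field_simp
    rw [hq, one_smul] at this
    have := R.neg_mem _ this
    rwa [neg_sub] at this
  exfalso
  have hcs : ⟪x, y⟫ * ⟪x, y⟫ ≤ ⟪x, x⟫ * ⟪y, y⟫ := by
    have := real_inner_mul_inner_self_le x y
    linarith
  have hprod : (n:ℝ) * (m:ℝ) * (⟪x, x⟫ * ⟪y, y⟫) = 4 * (⟪x, y⟫ * ⟪x, y⟫) := by
    have := congrArg₂ (· * ·) hn hm
    rw [hcomm] at this
    nlinarith [this]
  have hnm4 : (n:ℝ) * (m:ℝ) ≤ 4 := by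
    nlinarith [mul_pos hxx hyy]
  have hn2 : (2:ℝ) ≤ (n:ℝ) := by exact_mod_cast h1
  have hm2 : (2:ℝ) ≤ (m:ℝ) := by exact_mod_cast h2
  have hnm : (n:ℝ) = 2 ∧ (m:ℝ) = 2 := by constructor <;> nlinarith
  have hxy : ⟪x, y⟫ = ⟪y, y⟫ := by rw [hnm.1] at hn; linarith
  have hyx : ⟪x, y⟫ = ⟪x, x⟫ := by rw [hnm.2] at hm; rw [hcomm] at hm; linarith
  have hz : ⟪x - y, x - y⟫ = (0:ℝ) := by
    rw [inner_sub_sub_self, hcomm]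
    linarith
  exact hne (sub_eq_zero.1 (inner_self_eq_zero.1 hz))

theorem root_add (R : CrystRS E) {x y : E} (hx : x ∈ R.roots) (hy : y ∈ R.roots)
    (hne : x + y ≠ 0) (hneg : ⟪x, y⟫ < 0) : x + y ∈ R.roots := by
  have h1 : x ≠ -y := fun h => hne (by rw [h]; abel)
  have h2 : (0:ℝ) < ⟪x, -y⟫ := by rw [inner_neg_right]; linarith
  have h3 := root_sub R hx (R.neg_mem y hy) h1 h2
  rwa [sub_neg_eq_add] at h3

theorem h_facts (R : BasedRS E) (h : E →ₗ[ℝ] ℝ) (hh : ∀ γ ∈ R.simple, h γ = 1)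
    {x : E} (hx : x ∈ AddSubmonoid.closure (R.simple : Set E)) :
    0 ≤ h x ∧ (h x = 0 → x = 0) := by
  induction hx using AddSubmonoid.closure_induction with
  | mem γ hγ =>
    rw [hh γ (Finset.mem_coe.1 hγ)]
    exact ⟨zero_le_one, fun h01 => absurd h01 one_ne_zero⟩
  | zero => simp
  | add x y hxm hym ihx ihy =>
    rw [map_add]
    constructor
    · linarith [ihx.1, ihy.1]
    · intro h0
      have hx0 : h x = 0 := by linarith [ihx.1, ihy.1]
      have hy0 : h y = 0 := by linarith [ihx.1, ihy.1]
      rw [ihx.2 hx0, ihy.2 hy0, add_zero]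

theorem f_facts (R : BasedRS E) {α : E} (f : E →ₗ[ℝ] ℝ)
    (hfα : f α = 1) (hf0 : ∀ γ ∈ R.simple, γ ≠ α → f γ = 0)
    {x : E} (hx : x ∈ AddSubmonoid.closure (R.simple : Set E)) :
    (∃ n : ℕ, f x = n) ∧
    (f x = 0 → x ∈ Submodule.span ℤ ((R.simple : Set E) \ {α})) ∧
    (f x = 1 → x - α ∈ AddSubmonoid.closure (R.simple : Set E)) := by
  induction hx using AddSubmonoid.closure_induction with
  | mem γ hγ =>
    by_cases hc : γ = α
    · subst hc
      exact ⟨⟨1, by simp [hfα]⟩, fun h0 => by rw [hfα] at h0; norm_num at h0,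
        fun _ => by simpa using zero_mem _⟩
    · have h0 : f γ = 0 := hf0 γ (Finset.mem_coe.1 hγ) hc
      exact ⟨⟨0, by simp [h0]⟩,
        fun _ => Submodule.subset_span ⟨hγ, hc⟩,
        fun h1 => by rw [h0] at h1; norm_num at h1⟩
  | zero =>
    refine ⟨⟨0, by simp⟩, fun _ => zero_mem _, fun h1 => ?_⟩
    rw [map_zero] at h1; norm_num at h1
  | add x y hxm hym ihx ihy =>
    obtain ⟨⟨n, hn⟩, hx0, hx1⟩ := ihx
    obtain ⟨⟨m, hm⟩, hy0, hy1⟩ := ihy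
    have hadd : f (x + y) = ((n + m : ℕ) : ℝ) := by
      rw [map_add, hn, hm]; push_cast; ring
    refine ⟨⟨n + m, hadd⟩, ?_, ?_⟩
    · intro h0
      rw [hadd] at h0
      have hnm : n + m = 0 := by exact_mod_cast h0
      have hn0 : f x = 0 := by rw [hn]; norm_num; omega
      have hm0 : f y = 0 := by rw [hm]; norm_num; omega
      exact add_mem (hx0 hn0) (hy0 hm0)
    · intro h1
      rw [hadd] at h1
      have hnm : n + m = 1 := by exact_mod_cast h1
      have hcases : (n = 0 ∧ m = 1) ∨ (n = 1 ∧ m = 0) := by omega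
      rcases hcases with ⟨hn', hm'⟩ | ⟨hn', hm'⟩
      · have hy' : y - α ∈ AddSubmonoid.closure (R.simple : Set E) := by
          apply hy1; rw [hm, hm']; norm_num
        have : x + y - α = x + (y - α) := by abel
        rw [this]
        exact add_mem hxm hy'
      · have hx' : x - α ∈ AddSubmonoid.closure (R.simple : Set E) := by
          apply hx1; rw [hn, hn']; norm_num
        have : x + y - α = (x - α) + y := by abel
        rw [this]
        exact add_mem hx' hym

theorem f_span_zero (f : E →ₗ[ℝ] ℝ) {s : Set E} (h0 : ∀ γ ∈ s, f γ = 0)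
    {x : E} (hx : x ∈ Submodule.span ℤ s) : f x = 0 := by
  induction hx using Submodule.span_induction with
  | mem γ hγ => exact h0 γ hγ
  | zero => simp
  | add x y _ _ ih1 ih2 => rw [map_add, ih1, ih2, add_zero]
  | smul z x _ ih => rw [map_zsmul, ih, smul_zero]

theorem dom_nonneg (R : BasedRS E) {δ : E} (hdom : ∀ γ ∈ R.simple, 0 ≤ ⟪δ, γ⟫)
    {x : E} (hx : x ∈ AddSubmonoid.closure (R.simple : Set E)) : 0 ≤ ⟪δ, x⟫ := by
  induction hx using AddSubmonoid.closure_induction with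
  | mem γ hγ => exact hdom γ (Finset.mem_coe.1 hγ)
  | zero => simp
  | add x y hxm hym ihx ihy => rw [inner_add_right]; linarith

end Aux

theorem statement13 {E : Type} [NormedAddCommGroup E] [InnerProductSpace ℝ E] (R : BasedRS E) (hirr : R.toCrystRS.Irred)
    (θ : E) (hθ : R.IsHighest θ)
    (α : E) (hα : α ∈ R.simple) (hm : R.coeffOne α θ) :
    R.IsAbelianIdeal {β ∈ R.pos | R.le α β} ∧
    (∀ J : Set E, R.IsAbelianIdeal J → {β ∈ R.pos | R.le α β} ⊆ J →
      J = {β ∈ R.pos | R.le α β}) ∧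
    {β ∈ R.pos | R.le α β} = {β ∈ R.pos | R.coeffOne α β} := by
  classical
  obtain ⟨coords, hcoords⟩ := exists_coords R.simple R.simple_indep
  set f : E →ₗ[ℝ] ℝ := coords α with hfdef
  have hfα : f α = 1 := by rw [hfdef, hcoords α hα α hα, if_pos rfl]
  have hf0 : ∀ γ ∈ R.simple, γ ≠ α → f γ = 0 := fun γ hγ hne => by
    rw [hfdef, hcoords α hα γ hγ, if_neg hne]
  set h : E →ₗ[ℝ] ℝ := ∑ γ ∈ R.simple.attach, coords γ.1 with hhdef
  have hh1 : ∀ γ' ∈ R.simple, h γ' = 1 := by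
    intro γ' hγ'
    rw [hhdef, LinearMap.sum_apply]
    rw [Finset.sum_attach R.simple (fun γ => (coords γ) γ')]
    rw [Finset.sum_congr rfl (fun γ hγ => hcoords γ hγ γ' hγ')]
    rw [Finset.sum_ite_eq R.simple γ' (fun _ => (1:ℝ)), if_pos hγ']
  have hαS : α ∈ (R.simple : Set E) := Finset.mem_coe.2 hα
  have hαcl : α ∈ AddSubmonoid.closure (R.simple : Set E) := AddSubmonoid.subset_closure hαS
  have hαroot : α ∈ R.roots := R.simple_sub hαS
  have hαpos : α ∈ R.pos := ⟨hαroot, hαcl⟩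
  have hfθ : f θ = 1 := by
    have h0 : f (θ - α) = 0 := by
      refine f_span_zero f (fun γ hγ => hf0 γ (Finset.mem_coe.1 hγ.1) ?_) hm
      simpa using hγ.2
    have h2 : f θ - f α = 0 := by rw [← map_sub]; exact h0
    rw [hfα] at h2; linarith
  have fnonneg : ∀ x : E, x ∈ AddSubmonoid.closure (R.simple : Set E) → 0 ≤ f x := by
    intro x hx
    obtain ⟨⟨n, hn⟩, -, -⟩ := f_facts R f hfα hf0 hx
    rw [hn]; positivity
  have fbound : ∀ β ∈ R.roots, f β ≤ 1 := by
    intro β hβ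
    have hle : θ - β ∈ AddSubmonoid.closure (R.simple : Set E) := hθ.2 β hβ
    have h1 : (0:ℝ) ≤ f (θ - β) := fnonneg _ hle
    have h2 : f θ - f β = f (θ - β) := (map_sub f θ β).symm
    rw [hfθ] at h2; linarith
  have hiff : ∀ β ∈ R.pos, (R.le α β ↔ R.coeffOne α β) := by
    intro β hβ
    constructor
    · intro hle
      have hle' : β - α ∈ AddSubmonoid.closure (R.simple : Set E) := hle
      have h1 : f (β - α) = 0 := by
        have ha : (0:ℝ) ≤ f (β - α) := fnonneg _ hle'
        have hb : f β ≤ 1 := fbound β hβ.1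
        have hc : f (β - α) = f β - 1 := by rw [map_sub, hfα]
        linarith
      exact (f_facts R f hfα hf0 hle').2.1 h1
    · intro hco
      have h0 : f (β - α) = 0 := by
        refine f_span_zero f (fun γ hγ => hf0 γ (Finset.mem_coe.1 hγ.1) ?_) hco
        simpa using hγ.2
      have h1 : f β = 1 := by
        have hc : f (β - α) = f β - 1 := by rw [map_sub, hfα]
        linarith
      exact (f_facts R f hfα hf0 hβ.2).2.2 h1
  have habI : R.IsAbelianIdeal {β ∈ R.pos | R.le α β} := by
    refine ⟨fun β hβ => hβ.1, ?_, ?_⟩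
    · intro β hβ γ hγ hle
      refine ⟨hγ, ?_⟩
      show γ - α ∈ AddSubmonoid.closure (R.simple : Set E)
      have he : γ - α = (γ - β) + (β - α) := by abel
      rw [he]
      exact add_mem hle hβ.2
    · intro β hβ γ hγ hroot
      have h1 : (1:ℝ) ≤ f β := by
        have := fnonneg _ hβ.2
        have hc : f (β - α) = f β - 1 := by rw [map_sub, hfα]
        linarith
      have h2 : (1:ℝ) ≤ f γ := by
        have := fnonneg _ hγ.2
        have hc : f (γ - α) = f γ - 1 := by rw [map_sub, hfα]
        linarith
      have h3 : f (β + γ) ≤ 1 := fbound _ hroot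
      rw [map_add] at h3
      linarith
  refine ⟨habI, ?_, ?_⟩
  · -- maximality
    intro J hJ hIJ
    obtain ⟨hJpos, hJup, hJab⟩ := hJ
    refine Set.Subset.antisymm ?_ hIJ
    by_contra hcon
    rw [Set.not_subset] at hcon
    obtain ⟨δ0, hδ0J, hδ0I⟩ := hcon
    set T : Set E := {x ∈ J | ¬ R.le α x} with hTdef
    have hTne : T.Nonempty := ⟨δ0, hδ0J, fun hle => hδ0I ⟨hJpos hδ0J, hle⟩⟩
    have hTfin : T.Finite := R.finite.subset (fun x hx => (hJpos hx.1).1)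
    obtain ⟨δ, hδT, hδmax⟩ := Set.Finite.exists_maximalFor (fun x => h x) T hTfin hTne
    obtain ⟨hδJ, hδnle⟩ := hδT
    have hδpos : δ ∈ R.pos := hJpos hδJ
    have hδcl : δ ∈ AddSubmonoid.closure (R.simple : Set E) := hδpos.2
    have hδroot : δ ∈ R.roots := hδpos.1
    have hfδ : f δ = 0 := by
      obtain ⟨⟨n, hn⟩, -, h1imp⟩ := f_facts R f hfα hf0 hδcl
      have hb : f δ ≤ 1 := fbound δ hδroot
      have hn1 : n ≤ 1 := by rw [hn] at hb; exact_mod_cast hb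
      rcases Nat.lt_or_ge n 1 with hlt | hge
      · have hn0 : n = 0 := by omega
        rw [hn, hn0]; norm_num
      · have : n = 1 := by omega
        exact absurd (h1imp (by rw [hn, this]; norm_num)) hδnle
    by_cases hdom : ∀ γ ∈ R.simple, 0 ≤ ⟪δ, γ⟫
    · have hδne0 : δ ≠ 0 := R.nonzero δ hδroot
      have hθroot : θ ∈ R.roots := hθ.1.1
      have hθδ : θ - δ ∈ AddSubmonoid.closure (R.simple : Set E) := hθ.2 δ hδroot
      have hip : (0:ℝ) < ⟪θ, δ⟫ := by
        have h1 : (0:ℝ) ≤ ⟪δ, θ - δ⟫ := dom_nonneg R hdom hθδ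
        have h2 : (0:ℝ) < ⟪δ, δ⟫ := lt_of_le_of_ne real_inner_self_nonneg
          (fun hz => hδne0 (inner_self_eq_zero.1 hz.symm))
        have h3 : ⟪δ, θ - δ⟫ = ⟪δ, θ⟫ - ⟪δ, δ⟫ := by rw [inner_sub_right]
        rw [real_inner_comm δ θ]
        linarith
      have hθne : θ ≠ δ := by
        intro he
        rw [← he, hfθ] at hfδ
        norm_num at hfδ
      have hη : θ - δ ∈ R.roots := root_sub R.toCrystRS hθroot hδroot hθne hip
      have hηpos : θ - δ ∈ R.pos := ⟨hη, hθδ⟩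
      have hfη : f (θ - δ) = 1 := by rw [map_sub, hfθ, hfδ]; ring
      have hηmem : θ - δ ∈ {β ∈ R.pos | R.le α β} :=
        ⟨hηpos, (f_facts R f hfα hf0 hθδ).2.2 hfη⟩
      have hηJ : θ - δ ∈ J := hIJ hηmem
      apply hJab δ hδJ (θ - δ) hηJ
      have he : δ + (θ - δ) = θ := by abel
      rw [he]
      exact hθroot
    · push_neg at hdom
      obtain ⟨γ, hγs, hγneg⟩ := hdom
      have hγroot : γ ∈ R.roots := R.simple_sub (Finset.mem_coe.2 hγs)
      have hγcl : γ ∈ AddSubmonoid.closure (R.simple : Set E) :=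
        AddSubmonoid.subset_closure (Finset.mem_coe.2 hγs)
      have hhδ : (0:ℝ) ≤ h δ := (h_facts R h hh1 hδcl).1
      have hsum_ne : δ + γ ≠ 0 := by
        intro he
        have h1 : h (δ + γ) = 0 := by rw [he, map_zero]
        rw [map_add, hh1 γ hγs] at h1
        linarith
      have hsum : δ + γ ∈ R.roots := root_add R.toCrystRS hδroot hγroot hsum_ne hγneg
      by_cases hc : γ = α
      · have hαI : α ∈ {β ∈ R.pos | R.le α β} := by
          refine ⟨hαpos, ?_⟩
          show α - α ∈ AddSubmonoid.closure (R.simple : Set E)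
          rw [sub_self]
          exact zero_mem _
        have hγJ : γ ∈ J := by rw [hc]; exact hIJ hαI
        exact hJab δ hδJ γ hγJ hsum
      · have hsumcl : δ + γ ∈ AddSubmonoid.closure (R.simple : Set E) := add_mem hδcl hγcl
        have hsumpos : δ + γ ∈ R.pos := ⟨hsum, hsumcl⟩
        have hled : R.le δ (δ + γ) := by
          show δ + γ - δ ∈ AddSubmonoid.closure (R.simple : Set E)
          rw [add_sub_cancel_left]
          exact hγcl
        have hsumJ : δ + γ ∈ J := hJup δ hδJ (δ + γ) hsumpos hled
        have hfsum : f (δ + γ) = 0 := by rw [map_add, hfδ, hf0 γ hγs hc]; ring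
        have hsumnle : ¬ R.le α (δ + γ) := by
          intro hle
          have h1 : (0:ℝ) ≤ f (δ + γ - α) := fnonneg _ hle
          have h2 : f (δ + γ - α) = f (δ + γ) - 1 := by rw [map_sub, hfα]
          rw [hfsum] at h2
          linarith
        have hkey : h (δ + γ) = h δ + 1 := by rw [map_add, hh1 γ hγs]
        have := hδmax (j := δ + γ) ⟨hsumJ, hsumnle⟩ (by show h δ ≤ h (δ + γ); rw [hkey]; linarith)
        simp only [hkey] at this
        linarith
  · -- set equality
    ext β
    constructor
    · rintro ⟨h1, h2⟩
      exact ⟨h1, (hiff β h1).1 h2⟩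
    · rintro ⟨h1, h2⟩
      exact ⟨h1, (hiff β h1).2 h2⟩
end

section
/- Let Φ be a finite irreducible crystallographic root system, I an abelian nilradical of Φ⁺ (i.e., I = {β ∈ Φ⁺ : α ≤ β} for a simple root α of multiplicity 1 in the highest root, or I = ∅), H a linear subspace of the ambient space E, and Ψ = Φ ∩ H. Then I ∩ H is an abelian nilradical of Ψ⁺ = Ψ ∩ Φ⁺; that is, for each irreducible component Ψᵢ of Ψ, the intersection I ∩ Ψᵢ is either empty or the principal ideal of Ψᵢ⁺ generated by a simple root of Ψᵢ⁺ of multiplicity 1 in the highest root of Ψᵢ. -/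
local notation "⟪" x ", " y "⟫" => @inner ℝ _ _ x y

set_option linter.unusedSectionVars false


section Helpers
variable {E : Type} [NormedAddCommGroup E] [InnerProductSpace ℝ E]

private lemma ip_self_pos {x : E} (h : x ≠ 0) : (0:ℝ) < ⟪x, x⟫ :=
  lt_of_le_of_ne real_inner_self_nonneg (fun e => h (inner_self_eq_zero.mp e.symm))

private lemma mem_closure_finset {P : Finset E} {x : E}
    (hx : x ∈ AddSubmonoid.closure (P : Set E)) :
    ∃ c : E → ℕ, x = ∑ a ∈ P, c a • a := by
  classical
  induction hx using AddSubmonoid.closure_induction with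
  | mem a ha =>
      refine ⟨fun b => if b = a then 1 else 0, ?_⟩
      rw [Finset.sum_congr rfl (g := fun b => if b = a then b else 0)
        (fun b _ => by by_cases hba : b = a <;> simp [hba]),
        Finset.sum_ite_eq' P a (fun b => b), if_pos (Finset.mem_coe.mp ha)]
  | zero => exact ⟨fun _ => 0, by simp⟩
  | add x y hx hy ihx ihy =>
      obtain ⟨c, hc⟩ := ihx; obtain ⟨d, hd⟩ := ihy
      exact ⟨c + d, by simp [hc, hd, add_smul, Finset.sum_add_distrib]⟩

private lemma sum_mem_closure {P : Set E} {Q : Finset E} (h : ∀ a ∈ Q, a ∈ P) (c : E → ℕ) :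
    (∑ a ∈ Q, c a • a) ∈ AddSubmonoid.closure P :=
  AddSubmonoid.sum_mem _ fun a ha =>
    AddSubmonoid.nsmul_mem _ (AddSubmonoid.subset_closure (h a ha)) _

private lemma cast_smul_sum (Q : Finset E) (c : E → ℕ) :
    (∑ a ∈ Q, c a • a) = ∑ a ∈ Q, ((c a : ℝ)) • a := by
  refine Finset.sum_congr rfl fun a _ => ?_
  rw [Nat.cast_smul_eq_nsmul]

private lemma map_nat_sum (h : E →ₗ[ℝ] ℝ) (Q : Finset E) (c : E → ℕ) :
    h (∑ a ∈ Q, c a • a) = ∑ a ∈ Q, (c a : ℝ) * h a := by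
  rw [cast_smul_sum, map_sum]
  exact Finset.sum_congr rfl fun a _ => by rw [map_smul, smul_eq_mul]

private lemma span_orth {X Y : Set E} (h : ∀ x ∈ X, ∀ y ∈ Y, ⟪x, y⟫ = 0) :
    ∀ x ∈ Submodule.span ℝ X, ∀ y ∈ Submodule.span ℝ Y, ⟪x, y⟫ = 0 := by
  have key : ∀ x ∈ X, ∀ y ∈ Submodule.span ℝ Y, ⟪x, y⟫ = 0 := by
    intro x hx y hy
    induction hy using Submodule.span_induction with
    | mem b hb => exact h x hx b hb
    | zero => exact inner_zero_right x
    | add b c _ _ ihb ihc => rw [inner_add_right, ihb, ihc, add_zero]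
    | smul r b _ ihb => rw [real_inner_smul_right, ihb, mul_zero]
  intro x hx y hy
  induction hx using Submodule.span_induction with
  | mem a ha => exact key a ha y hy
  | zero => exact inner_zero_left y
  | add a b _ _ iha ihb => rw [inner_add_left, iha, ihb, add_zero]
  | smul r a _ iha => rw [real_inner_smul_left, iha, mul_zero]

private lemma root_sub_s15 (R : CrystRS E) {β γ : E} (hβ : β ∈ R.roots) (hγ : γ ∈ R.roots)
    (h : (0:ℝ) < ⟪β, γ⟫) : β - γ = 0 ∨ β - γ ∈ R.roots := by
  obtain ⟨m, hm⟩ := R.cartan β hβ γ hγ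
  obtain ⟨n, hn⟩ := R.cartan γ hγ β hβ
  have hγ2 : (0:ℝ) < ⟪γ, γ⟫ := ip_self_pos (R.nonzero γ hγ)
  have hβ2 : (0:ℝ) < ⟪β, β⟫ := ip_self_pos (R.nonzero β hβ)
  have hsym : ⟪γ, β⟫ = ⟪β, γ⟫ := real_inner_comm β γ
  have hm1 : 1 ≤ m := by
    have h1 : (0:ℝ) < (m:ℝ) * ⟪γ, γ⟫ := by rw [← hm]; linarith
    have h2 : (0:ℝ) < (m:ℝ) := by nlinarith
    have h3 : (0:ℤ) < m := by exact_mod_cast h2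
    omega
  have hn1 : 1 ≤ n := by
    have h1 : (0:ℝ) < (n:ℝ) * ⟪β, β⟫ := by rw [← hn]; linarith [hsym]
    have h2 : (0:ℝ) < (n:ℝ) := by nlinarith
    have h3 : (0:ℤ) < n := by exact_mod_cast h2
    omega
  rcases eq_or_lt_of_le hm1 with he | hm2
  · have hr := R.reflect β hβ γ hγ
    have hc : 2 * ⟪β, γ⟫ / ⟪γ, γ⟫ = 1 := by
      rw [hm, ← he]; field_simp; norm_num
    rw [hc, one_smul] at hr
    exact Or.inr hr
  rcases eq_or_lt_of_le hn1 with he | hn2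
  · have hr := R.reflect γ hγ β hβ
    have hc : 2 * ⟪γ, β⟫ / ⟪β, β⟫ = 1 := by
      rw [hn, ← he]; field_simp; norm_num
    rw [hc, one_smul] at hr
    have := R.neg_mem _ hr
    rw [neg_sub] at this
    exact Or.inr this
  · -- m ≥ 2 and n ≥ 2 : then m = n = 2 and β = γ
    have hcs : ⟪β, γ⟫ * ⟪β, γ⟫ ≤ ⟪β, β⟫ * ⟪γ, γ⟫ := real_inner_mul_inner_self_le β γ
    have hm2' : (2:ℝ) ≤ (m:ℝ) := by exact_mod_cast hm2
    have hn2' : (2:ℝ) ≤ (n:ℝ) := by exact_mod_cast hn2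
    have hbg : ⟪β, γ⟫ = ⟪γ, γ⟫ ∧ ⟪β, γ⟫ = ⟪β, β⟫ := by constructor <;> nlinarith
    left
    rw [← inner_self_eq_zero (𝕜 := ℝ)]
    have : ⟪β - γ, β - γ⟫ = ⟪β, β⟫ - ⟪β, γ⟫ - (⟪γ, β⟫ - ⟪γ, γ⟫) := by
      rw [inner_sub_left, inner_sub_right, inner_sub_right]
    rw [this, hsym]; linarith [hbg.1, hbg.2]

private lemma root_add_s15 (R : CrystRS E) {β γ : E} (hβ : β ∈ R.roots) (hγ : γ ∈ R.roots)
    (h : ⟪β, γ⟫ < 0) : β + γ = 0 ∨ β + γ ∈ R.roots := by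
  have h' : (0:ℝ) < ⟪β, -γ⟫ := by rw [inner_neg_right]; linarith
  have := root_sub_s15 R hβ (R.neg_mem γ hγ) h'
  rwa [sub_neg_eq_add] at this

end Helpers


section Dual
variable {E : Type} [NormedAddCommGroup E] [InnerProductSpace ℝ E]

private lemma exists_dual (Δ : Finset E)
    (hli : LinearIndependent ℝ (fun α : {x // x ∈ Δ} => (α : E))) (φ : E → ℝ) :
    ∃ f : E →ₗ[ℝ] ℝ, ∀ a ∈ Δ, f a = φ a := by
  classical
  have li : LinearIndepOn ℝ id (Δ : Set E) := hli
  let B := Module.Basis.extend li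
  have hsub : (Δ : Set E) ⊆ li.extend (Set.subset_univ _) := li.subset_extend _
  let f : E →ₗ[ℝ] ℝ :=
    ∑ a ∈ Δ.attach, φ (a : E) • (B.coord ⟨(a : E), hsub (Finset.mem_coe.mpr a.2)⟩)
  refine ⟨f, fun a ha => ?_⟩
  have key : ∀ b : {x // x ∈ Δ},
      (B.coord ⟨(b : E), hsub (Finset.mem_coe.mpr b.2)⟩) a
        = if (b : E) = a then 1 else 0 := by
    intro b
    have ha' : a = B ⟨a, hsub (Finset.mem_coe.mpr ha)⟩ := (Module.Basis.extend_apply_self li ⟨a, hsub (Finset.mem_coe.mpr ha)⟩).symm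
    rw [Module.Basis.coord_apply]
    conv_lhs => rw [ha']
    rw [Module.Basis.repr_self, Finsupp.single_apply]
    simp only [Subtype.mk.injEq]
    by_cases h : (b : E) = a
    · rw [if_pos h.symm, if_pos h]
    · rw [if_neg (fun e => h e.symm), if_neg h]
  have : f a = ∑ b ∈ Δ.attach, φ (b : E) * (if (b : E) = a then 1 else 0) := by
    simp only [f, LinearMap.sum_apply, LinearMap.smul_apply, smul_eq_mul]
    exact Finset.sum_congr rfl fun b _ => by rw [key]
  rw [this, Finset.sum_eq_single (⟨a, ha⟩ : {x // x ∈ Δ})]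
  · simp
  · intro b _ hb
    rw [if_neg (fun e => hb (Subtype.ext e)), mul_zero]
  · intro h; exact absurd (Finset.mem_attach _ _) h

end Dual

theorem statement15 {E : Type} [NormedAddCommGroup E] [InnerProductSpace ℝ E] (R : BasedRS E) (hirr : R.toCrystRS.Irred)
    (θ : E) (hθ : R.IsHighest θ)
    (I : Set E)
    (hI : I = ∅ ∨ ∃ α ∈ R.simple, R.coeffOne α θ ∧ I = {β ∈ R.pos | R.le α β})
    (H : Submodule ℝ E) :
    ∀ C : Set E, IsComponent (R.roots ∩ (H : Set E)) C →
      I ∩ C = ∅ ∨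
      ∃ α θC : E, α ∈ SimpleOf (C ∩ R.pos) ∧
        θC ∈ C ∩ R.pos ∧ (∀ β ∈ C ∩ R.pos, leRel (C ∩ R.pos) β θC) ∧
        θC - α ∈ Submodule.span ℤ (SimpleOf (C ∩ R.pos) \ {α}) ∧
        I ∩ C = {β ∈ C ∩ R.pos | leRel (C ∩ R.pos) α β} := by
  classical
  intro C hC
  rcases hI with hIe | ⟨α₀, hα₀Δ, hα₀c, hIdef⟩
  · left; rw [hIe, Set.empty_inter]
  obtain ⟨g, hg⟩ := exists_dual R.simple R.simple_indep (fun _ => (1:ℝ))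
  obtain ⟨f, hf⟩ := exists_dual R.simple R.simple_indep (fun a => if a = α₀ then (1:ℝ) else 0)
  have hfα₀ : f α₀ = 1 := by rw [hf α₀ hα₀Δ, if_pos rfl]
  have hfΔ0 : ∀ a ∈ R.simple, a ≠ α₀ → f a = 0 := fun a ha hne => by
    rw [hf a ha, if_neg hne]
  set clΔ := AddSubmonoid.closure ((R.simple : Set E)) with hclΔdef
  have hg_rep : ∀ {x}, x ∈ clΔ → ∃ N : ℕ, g x = N ∧ (x ≠ 0 → 1 ≤ N) := by
    intro x hx
    obtain ⟨c, hc⟩ := mem_closure_finset hx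
    refine ⟨∑ a ∈ R.simple, c a, ?_, ?_⟩
    · rw [hc, map_nat_sum, Nat.cast_sum]
      exact Finset.sum_congr rfl fun a ha => by rw [hg a ha, mul_one]
    · intro hx0
      by_contra hN
      have hz : ∀ a ∈ R.simple, c a = 0 :=
        fun a ha => Finset.sum_eq_zero_iff.mp (by omega) a ha
      exact hx0 (by rw [hc]; exact Finset.sum_eq_zero fun a ha => by rw [hz a ha, zero_smul])
  have hg_pos : ∀ {x}, x ∈ clΔ → x ≠ 0 → (1:ℝ) ≤ g x := by
    intro x hx hx0; obtain ⟨N, hN, h1⟩ := hg_rep hx; rw [hN]; exact_mod_cast h1 hx0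
  have hg_nonneg : ∀ {x}, x ∈ clΔ → 0 ≤ g x := by
    intro x hx; obtain ⟨N, hN, _⟩ := hg_rep hx; rw [hN]; positivity
  have hg_zero : ∀ {x}, x ∈ clΔ → g x = 0 → x = 0 := by
    intro x hx h0; by_contra hx0; linarith [hg_pos hx hx0]
  have hf_nat : ∀ {x}, x ∈ clΔ → ∃ N : ℕ, f x = N := by
    intro x hx
    induction hx using AddSubmonoid.closure_induction with
    | mem a ha =>
        by_cases h : a = α₀
        · exact ⟨1, by rw [h, hfα₀]; norm_num⟩
        · exact ⟨0, by rw [hfΔ0 a (Finset.mem_coe.mp ha) h]; norm_num⟩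
    | zero => exact ⟨0, by simp⟩
    | add x y hx hy ihx ihy =>
        obtain ⟨N, hN⟩ := ihx; obtain ⟨M, hM⟩ := ihy
        exact ⟨N + M, by rw [map_add, hN, hM]; push_cast; ring⟩
  have hf_nonneg : ∀ {x}, x ∈ clΔ → (0:ℝ) ≤ f x := by
    intro x hx; obtain ⟨N, hN⟩ := hf_nat hx; rw [hN]; positivity
  have hposΦ : R.pos ⊆ R.roots := fun x hx => hx.1
  have hposcl : ∀ {x}, x ∈ R.pos → x ∈ clΔ := fun hx => hx.2
  have hsplit : ∀ β ∈ R.roots, β ∈ R.pos ∨ -β ∈ R.pos := by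
    intro β hβ
    rcases R.decomp β hβ with h | h
    · exact Or.inl ⟨hβ, h⟩
    · exact Or.inr ⟨R.neg_mem β hβ, h⟩
  have hnotboth : ∀ β, β ∈ R.pos → -β ∈ R.pos → False := by
    intro β h1 h2
    have hβ0 : β ≠ 0 := R.nonzero β h1.1
    have ha := hg_pos (hposcl h1) hβ0
    have hb := hg_pos (hposcl h2) (by simpa using hβ0)
    rw [map_neg] at hb
    linarith
  have hfθ : f θ = 1 := by
    have hker : ∀ x ∈ Submodule.span ℤ (((R.simple : Set E)) \ {α₀}), f x = 0 := by
      intro x hx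
      induction hx using Submodule.span_induction with
      | mem a ha => exact hfΔ0 a (Finset.mem_coe.mp ha.1) ha.2
      | zero => exact map_zero f
      | add a b _ _ iha ihb => rw [map_add, iha, ihb, add_zero]
      | smul z a _ iha => rw [map_zsmul, iha, smul_zero]
    have h1 := hker (θ - α₀) hα₀c
    rw [map_sub] at h1
    linarith [hfα₀]
  have hf_le1 : ∀ β ∈ R.roots, f β ≤ 1 := by
    intro β hβ
    have hle : θ - β ∈ clΔ := hθ.2 β hβ
    have h2 := hf_nonneg hle
    rw [map_sub] at h2; linarith [hfθ]
  have hf_posmem : ∀ β ∈ R.roots, 0 < f β → β ∈ R.pos := by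
    intro β hβ h
    rcases hsplit β hβ with h1 | h1
    · exact h1
    · exfalso; have h2 := hf_nonneg (hposcl h1); rw [map_neg] at h2; linarith
  have hI_iff : ∀ β, β ∈ I ↔ (β ∈ R.roots ∧ f β = 1) := by
    intro β
    rw [hIdef]
    constructor
    · rintro ⟨hβp, hβle⟩
      have h2 := hf_nonneg (hβle : β - α₀ ∈ clΔ)
      rw [map_sub] at h2
      exact ⟨hposΦ hβp, le_antisymm (hf_le1 β (hposΦ hβp)) (by linarith [hfα₀])⟩
    · rintro ⟨hβΦ, hβ1⟩
      have hβp : β ∈ R.pos := hf_posmem β hβΦ (by rw [hβ1]; norm_num)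
      refine ⟨hβp, ?_⟩
      obtain ⟨c, hc⟩ := mem_closure_finset (hposcl hβp)
      have hfc : f β = (c α₀ : ℝ) := by
        rw [hc, map_nat_sum, Finset.sum_eq_single α₀]
        · rw [hfα₀, mul_one]
        · intro b hb hbne; rw [hfΔ0 b hb hbne, mul_zero]
        · intro h; exact absurd hα₀Δ h
      have hcast : (c α₀ : ℝ) = 1 := by rw [← hfc, hβ1]
      have hcα : c α₀ = 1 := by exact_mod_cast hcast
      show β - α₀ ∈ clΔ
      have hsum : β = α₀ + ∑ a ∈ R.simple.erase α₀, c a • a := by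
        rw [hc, ← Finset.add_sum_erase _ _ hα₀Δ, hcα, one_smul]
      rw [hsum, add_sub_cancel_left]
      exact sum_mem_closure (fun a ha => Finset.mem_coe.mpr (Finset.mem_of_mem_erase ha)) c
  obtain ⟨hCsub, hCne, hCorth, hCirr⟩ := hC
  have hCΦ : ∀ {x}, x ∈ C → x ∈ R.roots := fun hx => (hCsub hx).1
  have hCH : ∀ {x}, x ∈ C → x ∈ H := fun hx => (hCsub hx).2
  have htrick : ∀ x, x ∈ R.roots → x ∈ H → x ∈ Submodule.span ℝ C → x ∈ C := by
    intro x hxΦ hxH hxs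
    by_contra hxc
    have h0 : ∀ y ∈ Submodule.span ℝ C, ⟪y, x⟫ = 0 := by
      intro y hy
      induction hy using Submodule.span_induction with
      | mem a ha => exact hCorth a ha x ⟨⟨hxΦ, hxH⟩, hxc⟩
      | zero => exact inner_zero_left x
      | add a b _ _ iha ihb => rw [inner_add_left, iha, ihb, add_zero]
      | smul r a _ iha => rw [real_inner_smul_left, iha, mul_zero]
    exact R.nonzero x hxΦ (inner_self_eq_zero.mp (h0 x hxs))
  have hCneg : ∀ {β}, β ∈ C → -β ∈ C := by
    intro β hβ
    exact htrick _ (R.neg_mem β (hCΦ hβ)) (H.neg_mem (hCH hβ))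
      (Submodule.neg_mem _ (Submodule.subset_span hβ))
  have hCsplit : ∀ {β}, β ∈ C → β ∈ C ∩ R.pos ∨ -β ∈ C ∩ R.pos := by
    intro β hβ
    rcases hsplit β (hCΦ hβ) with h | h
    · exact Or.inl ⟨hβ, h⟩
    · exact Or.inr ⟨hCneg hβ, h⟩
  have hCdiff : ∀ {β γ}, β ∈ C → γ ∈ C → 0 < ⟪β, γ⟫ → β = γ ∨ β - γ ∈ C := by
    intro β γ hβ hγ h
    rcases root_sub_s15 R.toCrystRS (hCΦ hβ) (hCΦ hγ) h with h1 | h1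
    · exact Or.inl (sub_eq_zero.mp h1)
    · exact Or.inr (htrick _ h1 (H.sub_mem (hCH hβ) (hCH hγ))
        (Submodule.sub_mem _ (Submodule.subset_span hβ) (Submodule.subset_span hγ)))
  have hCsum : ∀ {β γ}, β ∈ C → γ ∈ C → ⟪β, γ⟫ < 0 → β = -γ ∨ β + γ ∈ C := by
    intro β γ hβ hγ h
    rcases root_add_s15 R.toCrystRS (hCΦ hβ) (hCΦ hγ) h with h1 | h1
    · exact Or.inl (eq_neg_of_add_eq_zero_left h1)
    · exact Or.inr (htrick _ h1 (H.add_mem (hCH hβ) (hCH hγ))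
        (Submodule.add_mem _ (Submodule.subset_span hβ) (Submodule.subset_span hγ)))
  have hposadd : ∀ {x y}, x ∈ R.pos → y ∈ R.pos → x + y ∈ R.roots → x + y ∈ R.pos :=
    fun hx hy hΦ => ⟨hΦ, AddSubmonoid.add_mem _ (hposcl hx) (hposcl hy)⟩
  set Cp := C ∩ R.pos with hCpdef
  have hCpC : ∀ {x}, x ∈ Cp → x ∈ C := fun hx => hx.1
  have hCppos : ∀ {x}, x ∈ Cp → x ∈ R.pos := fun hx => hx.2
  have hCfin : C.Finite := R.finite.subset (fun x hx => hCΦ hx)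
  have hSfin : (SimpleOf Cp).Finite := hCfin.subset (fun s hs => (hs.1 : s ∈ Cp).1)
  set SF := hSfin.toFinset with hSFdef
  have hSF : ∀ {s}, s ∈ SF ↔ s ∈ SimpleOf Cp := fun {s} => Set.Finite.mem_toFinset _
  have hSFCp : ∀ {s}, s ∈ SF → s ∈ Cp := fun hs => (hSF.mp hs).1
  have hCpcl : ∀ {x}, x ∈ Cp → x ∈ clΔ := fun hx => hposcl (hCppos hx)
  have hclCp : ∀ {x}, x ∈ AddSubmonoid.closure Cp → x ∈ clΔ := by
    intro x hx
    exact AddSubmonoid.closure_le.mpr (fun y hy => hCpcl hy) hx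
  have hCp0 : ∀ {β}, β ∈ Cp → β ≠ 0 := fun hβ => R.nonzero _ (hCΦ (hCpC hβ))
  have hgCp : ∀ {β}, β ∈ Cp → (1:ℝ) ≤ g β := fun hβ => hg_pos (hCpcl hβ) (hCp0 hβ)
  have hdecS : ∀ β ∈ Cp, β ∈ AddSubmonoid.closure ((SF : Set E)) := by
    have key : ∀ n : ℕ, ∀ β ∈ Cp, g β ≤ (n:ℝ) → β ∈ AddSubmonoid.closure ((SF : Set E)) := by
      intro n
      induction n with
      | zero => intro β hβ hgβ; exfalso; have := hgCp hβ; norm_num at hgβ; linarith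
      | succ n ih =>
        intro β hβ hgβ
        by_cases hs : β ∈ SimpleOf Cp
        · exact AddSubmonoid.subset_closure (Finset.mem_coe.mpr (hSF.mpr hs))
        · have h2 : ¬ ∀ γ ∈ Cp, ∀ δ ∈ Cp, β ≠ γ + δ := fun h => hs ⟨hβ, h⟩
          push_neg at h2
          obtain ⟨γ, hγ, δ, hδ, he⟩ := h2
          have hgsum : g β = g γ + g δ := by rw [he, map_add]
          have h3 := hgCp hγ; have h4 := hgCp hδ
          have hγn : g γ ≤ (n:ℝ) := by push_cast at hgβ ⊢; linarith
          have hδn : g δ ≤ (n:ℝ) := by push_cast at hgβ ⊢; linarith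
          rw [he]
          exact AddSubmonoid.add_mem _ (ih γ hγ hγn) (ih δ hδ hδn)
    intro β hβ
    obtain ⟨N, hN, _⟩ := hg_rep (hCpcl hβ)
    exact key N β hβ (le_of_eq hN)
  have hrepS : ∀ β ∈ Cp, ∃ c : E → ℕ, β = ∑ s ∈ SF, c s • s :=
    fun β hβ => mem_closure_finset (hdecS β hβ)
  have hobtuse : ∀ {s t}, s ∈ SF → t ∈ SF → s ≠ t → ⟪s, t⟫ ≤ 0 := by
    intro s t hs ht hne
    by_contra h
    push_neg at h
    rcases hCdiff (hCpC (hSFCp hs)) (hCpC (hSFCp ht)) h with h1 | h1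
    · exact hne h1
    · rcases hCsplit h1 with h2 | h2
      · exact ((hSF.mp hs).2 t (hSFCp ht) (s - t) h2) (by abel)
      · rw [neg_sub] at h2
        exact ((hSF.mp ht).2 s (hSFCp hs) (t - s) h2) (by abel)
  by_cases hC1 : ∃ β ∈ C, f β = 1
  swap
  · left
    rw [Set.eq_empty_iff_forall_notMem]
    rintro β ⟨hβI, hβC⟩
    exact hC1 ⟨β, hβC, ((hI_iff β).mp hβI).2⟩
  obtain ⟨β₀, hβ₀C, hβ₀f⟩ := hC1
  have hβ₀Cp : β₀ ∈ Cp := ⟨hβ₀C, hf_posmem β₀ (hCΦ hβ₀C) (by rw [hβ₀f]; norm_num)⟩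
  have hf01S : ∀ s ∈ SF, f s = 0 ∨ f s = 1 := by
    intro s hs
    obtain ⟨N, hN⟩ := hf_nat (hCpcl (hSFCp hs))
    have h1 : f s ≤ 1 := hf_le1 s (hCΦ (hCpC (hSFCp hs)))
    rw [hN] at h1 ⊢
    have h2 : N ≤ 1 := by exact_mod_cast h1
    have h3 : N = 0 ∨ N = 1 := by omega
    rcases h3 with h3 | h3 <;> rw [h3] <;> [exact Or.inl (by norm_num); exact Or.inr (by norm_num)]
  have hαex : ∃ s ∈ SF, f s = 1 := by
    by_contra hno
    push_neg at hno
    obtain ⟨c, hc⟩ := hrepS β₀ hβ₀Cp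
    have h0 : f β₀ = 0 := by
      rw [hc, map_nat_sum]
      exact Finset.sum_eq_zero fun s hs => by
        rcases hf01S s hs with h | h
        · rw [h, mul_zero]
        · exact absurd h (hno s hs)
    rw [hβ₀f] at h0
    exact absurd h0 one_ne_zero
  obtain ⟨α, hαSF, hαf⟩ := hαex
  have hCpfin : Cp.Finite := hCfin.subset (fun x hx => hx.1)
  obtain ⟨θC, hθCp, hθCmax⟩ := Set.exists_max_image Cp g hCpfin ⟨β₀, hβ₀Cp⟩
  have hgclCp : ∀ {x}, x ∈ AddSubmonoid.closure Cp → x ≠ 0 → (1:ℝ) ≤ g x :=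
    fun hx hx0 => hg_pos (hclCp hx) hx0
  have hθCM : ∀ δ ∈ Cp, δ - θC ∈ AddSubmonoid.closure Cp → δ = θC := by
    intro δ hδ hdiff
    by_contra hne
    have h1 := hgclCp hdiff (sub_ne_zero.mpr hne)
    rw [map_sub] at h1
    linarith [hθCmax δ hδ]
  obtain ⟨cθ, hcθ⟩ := hrepS θC hθCp
  have hθCfull : ∀ s ∈ SF, cθ s ≠ 0 := by
    by_contra hfull
    push_neg at hfull
    obtain ⟨s₂, hs₂SF, hs₂0⟩ := hfull
    set S1 := SF.filter (fun s => cθ s ≠ 0) with hS1def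
    set S2 := SF.filter (fun s => ¬ (cθ s ≠ 0)) with hS2def
    have hS1SF : ∀ {s}, s ∈ S1 → s ∈ SF := fun hs => (Finset.mem_filter.mp hs).1
    have hS2SF : ∀ {s}, s ∈ S2 → s ∈ SF := fun hs => (Finset.mem_filter.mp hs).1
    have hS1c : ∀ {s}, s ∈ S1 → cθ s ≠ 0 := fun hs => (Finset.mem_filter.mp hs).2
    have hS2c : ∀ {s}, s ∈ S2 → cθ s = 0 := fun hs => not_not.mp (Finset.mem_filter.mp hs).2
    have hs₂S2 : s₂ ∈ S2 := Finset.mem_filter.mpr ⟨hs₂SF, not_not.mpr hs₂0⟩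
    by_cases hadj : ∃ t₂ ∈ S2, ∃ t₁ ∈ S1, ⟪t₁, t₂⟫ ≠ 0
    · obtain ⟨t₂, ht₂, t₁, ht₁, hne⟩ := hadj
      have ht₁t₂ : t₁ ≠ t₂ := fun e => hS1c ht₁ (e ▸ hS2c ht₂)
      have hlt : ⟪t₁, t₂⟫ < 0 := lt_of_le_of_ne (hobtuse (hS1SF ht₁) (hS2SF ht₂) ht₁t₂) hne
      have hterm : ∀ s ∈ SF, (cθ s : ℝ) * ⟪s, t₂⟫ ≤ 0 := by
        intro s hs
        by_cases h0 : cθ s = 0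
        · rw [h0]; norm_num
        · have hst : s ≠ t₂ := fun e => h0 (e ▸ hS2c ht₂)
          have ho := hobtuse hs (hS2SF ht₂) hst
          have hc0 : (0:ℝ) ≤ (cθ s:ℝ) := by positivity
          nlinarith
      have hip : ⟪θC, t₂⟫ = ∑ s ∈ SF, (cθ s : ℝ) * ⟪s, t₂⟫ := by
        rw [hcθ, cast_smul_sum, sum_inner]
        exact Finset.sum_congr rfl fun s hs => real_inner_smul_left s t₂ _
      have hneg : ⟪θC, t₂⟫ < 0 := by
        rw [hip, ← Finset.add_sum_erase _ _ (hS1SF ht₁)]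
        have h1 : (cθ t₁:ℝ) * ⟪t₁, t₂⟫ < 0 := by
          have hge : (1:ℝ) ≤ (cθ t₁ : ℝ) := by
            exact_mod_cast Nat.one_le_iff_ne_zero.mpr (hS1c ht₁)
          nlinarith
        have h2 : ∑ s ∈ SF.erase t₁, (cθ s:ℝ) * ⟪s, t₂⟫ ≤ 0 :=
          Finset.sum_nonpos fun s hs => hterm s (Finset.mem_of_mem_erase hs)
        linarith
      have ht₂Cp : t₂ ∈ Cp := hSFCp (hS2SF ht₂)
      rcases hCsum (hCpC hθCp) (hCpC ht₂Cp) hneg with h1 | h1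
      · exact hnotboth t₂ (hCppos ht₂Cp) (h1 ▸ hCppos hθCp)
      · have hΦ1 : θC + t₂ ∈ R.roots := hCΦ h1
        have hsum_pos : θC + t₂ ∈ Cp := ⟨h1, hposadd (hCppos hθCp) (hCppos ht₂Cp) hΦ1⟩
        have hmx := hθCmax _ hsum_pos
        have hg2 : g (θC + t₂) = g θC + g t₂ := map_add g θC t₂
        have hg3 := hgCp ht₂Cp
        linarith
    · push_neg at hadj
      have horthXY : ∀ x ∈ (S1:Set E), ∀ y ∈ (S2:Set E), ⟪x, y⟫ = 0 :=
        fun x hx y hy => hadj y (Finset.mem_coe.mp hy) x (Finset.mem_coe.mp hx)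
      have hperp := span_orth horthXY
      have hmix : ∀ n : ℕ, ∀ β ∈ Cp, g β ≤ (n:ℝ) →
          β ∈ Submodule.span ℝ ((S1:Set E)) ∨ β ∈ Submodule.span ℝ ((S2:Set E)) := by
        intro n
        induction n using Nat.strong_induction_on with
        | _ n ih =>
        intro β hβ hgn
        obtain ⟨d, hd⟩ := hrepS β hβ
        set x := ∑ s ∈ S1, d s • s with hxdef
        set y := ∑ s ∈ S2, d s • s with hydef
        have hxy : β = x + y := by
          rw [hd, hxdef, hydef]
          exact (Finset.sum_filter_add_sum_filter_not SF _ _).symm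
        have hxspan : x ∈ Submodule.span ℝ ((S1:Set E)) := by
          rw [hxdef, cast_smul_sum]
          exact Submodule.sum_mem _ fun s hs =>
            Submodule.smul_mem _ _ (Submodule.subset_span (Finset.mem_coe.mpr hs))
        have hyspan : y ∈ Submodule.span ℝ ((S2:Set E)) := by
          rw [hydef, cast_smul_sum]
          exact Submodule.sum_mem _ fun s hs =>
            Submodule.smul_mem _ _ (Submodule.subset_span (Finset.mem_coe.mpr hs))
        by_cases hx0 : x = 0
        · right; rw [hxy, hx0, zero_add]; exact hyspan
        by_cases hy0 : y = 0
        · left; rw [hxy, hy0, add_zero]; exact hxspan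
        have hxcl : x ∈ clΔ := by
          rw [hxdef]
          exact AddSubmonoid.sum_mem _ fun s hs =>
            AddSubmonoid.nsmul_mem _ (hCpcl (hSFCp (hS1SF hs))) _
        have hycl : y ∈ clΔ := by
          rw [hydef]
          exact AddSubmonoid.sum_mem _ fun s hs =>
            AddSubmonoid.nsmul_mem _ (hCpcl (hSFCp (hS2SF hs))) _
        have hgx : 1 ≤ g x := hg_pos hxcl hx0
        have hgy : 1 ≤ g y := hg_pos hycl hy0
        have hgβxy : g β = g x + g y := by rw [hxy, map_add]
        have hn2 : (2:ℝ) ≤ (n:ℝ) := le_trans (by linarith) hgn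
        have hn2' : 2 ≤ n := by exact_mod_cast hn2
        have hβx : ⟪β, x⟫ = ⟪x, x⟫ := by
          have hyx : ⟪y, x⟫ = 0 := by
            rw [real_inner_comm]; exact hperp x hxspan y hyspan
          rw [hxy, inner_add_left, hyx, add_zero]
        have hβxpos : 0 < ⟪β, x⟫ := by rw [hβx]; exact ip_self_pos hx0
        have hsum : ⟪β, x⟫ = ∑ s ∈ S1, (d s:ℝ) * ⟪β, s⟫ := by
          rw [hxdef, cast_smul_sum, inner_sum]
          exact Finset.sum_congr rfl fun s hs => real_inner_smul_right β s _
        obtain ⟨s₁, hs₁S1, hs₁pos⟩ : ∃ s ∈ S1, 0 < (d s:ℝ) * ⟪β, s⟫ := by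
          by_contra hall; push_neg at hall
          have hsp := Finset.sum_nonpos hall
          rw [← hsum] at hsp
          linarith
        have hds₁ : d s₁ ≠ 0 := by
          rintro h0; rw [h0] at hs₁pos; norm_num at hs₁pos
        have hβs₁ : 0 < ⟪β, s₁⟫ := by
          rcases lt_or_ge 0 ⟪β, s₁⟫ with h | h
          · exact h
          · exfalso; nlinarith [hs₁pos, (by positivity : (0:ℝ) ≤ (d s₁:ℝ))]
        have hs₁Cp : s₁ ∈ Cp := hSFCp (hS1SF hs₁S1)
        rcases hCdiff (hCpC hβ) (hCpC hs₁Cp) hβs₁ with heq | hβ'C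
        · left; rw [heq]; exact Submodule.subset_span (Finset.mem_coe.mpr hs₁S1)
        have hβ'Cp : β - s₁ ∈ Cp := by
          rcases hCsplit hβ'C with h | h
          · exact h
          · exfalso
            rw [neg_sub] at h
            exact ((hSF.mp (hS1SF hs₁S1)).2 β hβ (s₁ - β) h) (by abel)
        have hgβ' : g (β - s₁) = g β - g s₁ := by rw [map_sub]
        have hgs₁ : 1 ≤ g s₁ := hgCp hs₁Cp
        have hm1 : g (β - s₁) ≤ ((n-1 : ℕ):ℝ) := by
          rw [Nat.cast_sub (by omega)]; push_cast; linarith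
        rcases ih (n-1) (by omega) (β - s₁) hβ'Cp hm1 with h1 | h1
        · left
          have hre : β = (β - s₁) + s₁ := by abel
          rw [hre]
          exact Submodule.add_mem _ h1 (Submodule.subset_span (Finset.mem_coe.mpr hs₁S1))
        · exfalso
          have hper1 : ⟪β - s₁, s₁⟫ = 0 := by
            rw [real_inner_comm]
            exact hperp s₁ (Submodule.subset_span (Finset.mem_coe.mpr hs₁S1)) _ h1
          have hβs₁' : ⟪β, s₁⟫ = ⟪s₁, s₁⟫ := by
            have hsl : ⟪β - s₁, s₁⟫ = ⟪β, s₁⟫ - ⟪s₁, s₁⟫ := inner_sub_left β s₁ s₁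
            linarith
          have hs₁0 : s₁ ≠ 0 := hCp0 hs₁Cp
          have hip0 : ⟪s₁, s₁⟫ ≠ 0 := fun e => hs₁0 (inner_self_eq_zero.mp e)
          have hcoef : 2 * ⟪β, s₁⟫ / ⟪s₁, s₁⟫ = 2 := by
            rw [hβs₁']; field_simp
          have hrefl := R.reflect β (hCΦ (hCpC hβ)) s₁ (hCΦ (hCpC hs₁Cp))
          rw [hcoef] at hrefl
          have hδval : β - (2:ℝ) • s₁ = (β - s₁) - s₁ := by
            rw [two_smul]; abel
          rw [hδval] at hrefl
          have hδC : (β - s₁) - s₁ ∈ C := htrick _ hrefl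
            (H.sub_mem (H.sub_mem (hCH (hCpC hβ)) (hCH (hCpC hs₁Cp))) (hCH (hCpC hs₁Cp)))
            (Submodule.sub_mem _ (Submodule.sub_mem _ (Submodule.subset_span (hCpC hβ))
              (Submodule.subset_span (hCpC hs₁Cp))) (Submodule.subset_span (hCpC hs₁Cp)))
          have hδCp : (β - s₁) - s₁ ∈ Cp := by
            rcases hCsplit hδC with h | h
            · exact h
            · exfalso
              have hre : -((β - s₁) - s₁) = s₁ - (β - s₁) := by abel
              rw [hre] at h
              exact ((hSF.mp (hS1SF hs₁S1)).2 (β - s₁) hβ'Cp (s₁ - (β - s₁)) h) (by abel)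
          have hgδ : g ((β - s₁) - s₁) ≤ ((n-2:ℕ):ℝ) := by
            rw [map_sub, hgβ', Nat.cast_sub hn2']; push_cast; linarith
          rcases ih (n-2) (by omega) _ hδCp hgδ with h2 | h2
          · have h3 : ⟪(β - s₁) - s₁, β - s₁⟫ = 0 := hperp _ h2 _ h1
            have h4 : ⟪(β - s₁) - s₁, β - s₁⟫ = ⟪β - s₁, β - s₁⟫ - ⟪s₁, β - s₁⟫ :=
              inner_sub_left _ _ _
            have h5 : ⟪s₁, β - s₁⟫ = 0 := by rw [real_inner_comm]; exact hper1
            have h6 : (0:ℝ) < ⟪β - s₁, β - s₁⟫ := ip_self_pos (hCp0 hβ'Cp)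
            linarith
          · have h3 : s₁ ∈ Submodule.span ℝ ((S2:Set E)) := by
              have hre : s₁ = (β - s₁) - ((β - s₁) - s₁) := by abel
              rw [hre]
              exact Submodule.sub_mem _ h1 h2
            have h4 : ⟪s₁, s₁⟫ = 0 :=
              hperp s₁ (Submodule.subset_span (Finset.mem_coe.mpr hs₁S1)) s₁ h3
            exact hs₁0 (inner_self_eq_zero.mp h4)
      have hS1ne : S1.Nonempty := by
        rw [Finset.nonempty_iff_ne_empty]
        intro hS1e
        have hz : ∀ s ∈ SF, cθ s = 0 := by
          intro s hs
          by_contra h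
          have hm : s ∈ S1 := Finset.mem_filter.mpr ⟨hs, h⟩
          rw [hS1e] at hm
          exact absurd hm (Finset.notMem_empty s)
        have hθ0 : θC = 0 := by
          rw [hcθ]; exact Finset.sum_eq_zero fun s hs => by rw [hz s hs, zero_smul]
        exact hCp0 hθCp hθ0
      obtain ⟨s₁, hs₁S1⟩ := hS1ne
      have hAB : C = (C ∩ ((Submodule.span ℝ ((S1:Set E)) : Submodule ℝ E) : Set E)) ∪
          (C ∩ ((Submodule.span ℝ ((S2:Set E)) : Submodule ℝ E) : Set E)) := by
        apply Set.Subset.antisymm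
        · intro β hβ
          rcases hCsplit hβ with h | h
          · obtain ⟨N, hN, _⟩ := hg_rep (hCpcl h)
            rcases hmix N β h (le_of_eq hN) with h1 | h1
            · exact Or.inl ⟨hβ, h1⟩
            · exact Or.inr ⟨hβ, h1⟩
          · obtain ⟨N, hN, _⟩ := hg_rep (hCpcl h)
            rcases hmix N (-β) h (le_of_eq hN) with h1 | h1
            · exact Or.inl ⟨hβ, by simpa using Submodule.neg_mem _ h1⟩
            · exact Or.inr ⟨hβ, by simpa using Submodule.neg_mem _ h1⟩
        · rintro β (⟨h, _⟩ | ⟨h, _⟩) <;> exact h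
      rcases hCirr _ _ hAB (fun a ha b hb => hperp a ha.2 b hb.2) with he | he
      · have hm : s₁ ∈ C ∩ ((Submodule.span ℝ ((S1:Set E)) : Submodule ℝ E) : Set E) :=
          ⟨hCpC (hSFCp (hS1SF hs₁S1)), Submodule.subset_span (Finset.mem_coe.mpr hs₁S1)⟩
        rw [he] at hm
        exact absurd hm (Set.notMem_empty s₁)
      · have hm : s₂ ∈ C ∩ ((Submodule.span ℝ ((S2:Set E)) : Submodule ℝ E) : Set E) :=
          ⟨hCpC (hSFCp hs₂SF), Submodule.subset_span (Finset.mem_coe.mpr hs₂S2)⟩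
        rw [he] at hm
        exact absurd hm (Set.notMem_empty s₂)
  have hcθ1 : ∀ s ∈ SF, 1 ≤ cθ s := fun s hs => Nat.one_le_iff_ne_zero.mpr (hθCfull s hs)
  have hMaxTheta : ∀ θ' ∈ Cp, (∀ δ ∈ Cp, δ - θ' ∈ AddSubmonoid.closure Cp → δ = θ') → θ' = θC := by
    intro θ' hθ' hmax
    have hup : ∀ s ∈ SF, 0 ≤ ⟪θ', s⟫ := by
      intro s hs
      by_contra hlt
      push_neg at hlt
      have hsCp := hSFCp hs
      rcases hCsum (hCpC hθ') (hCpC hsCp) hlt with h1 | h1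
      · exact hnotboth s (hCppos hsCp) (h1 ▸ hCppos hθ')
      · have hpos : θ' + s ∈ Cp := ⟨h1, hposadd (hCppos hθ') (hCppos hsCp) (hCΦ h1)⟩
        have heq := hmax _ hpos (by
          have hre : θ' + s - θ' = s := by abel
          rw [hre]
          exact AddSubmonoid.subset_closure hsCp)
        exact hCp0 hsCp (add_eq_left.mp heq)
    obtain ⟨d, hd⟩ := hrepS θ' hθ'
    have hθ'θ' : 0 < ⟪θ', θ'⟫ := ip_self_pos (hCp0 hθ')
    obtain ⟨s₀, hs₀SF, hs₀pos⟩ : ∃ s ∈ SF, 0 < ⟪θ', s⟫ := by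
      by_contra hall
      push_neg at hall
      have hz : ∑ s ∈ SF, (d s:ℝ) * ⟪θ', s⟫ = 0 :=
        Finset.sum_eq_zero fun s hs => by
          rw [le_antisymm (hall s hs) (hup s hs), mul_zero]
      have hsum' : ⟪θ', θ'⟫ = ∑ s ∈ SF, (d s:ℝ) * ⟪θ', s⟫ := by
        have h' : ⟪θ', θ'⟫ = ⟪θ', ∑ s ∈ SF, d s • s⟫ := by rw [← hd]
        rw [h', cast_smul_sum, inner_sum]
        exact Finset.sum_congr rfl fun s hs => real_inner_smul_right θ' s _
      rw [hz] at hsum'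
      linarith
    have hθθC : 0 < ⟪θ', θC⟫ := by
      have hsums : ⟪θ', θC⟫ = ∑ s ∈ SF, (cθ s:ℝ) * ⟪θ', s⟫ := by
        have h' : ⟪θ', θC⟫ = ⟪θ', ∑ s ∈ SF, cθ s • s⟫ := by rw [← hcθ]
        rw [h', cast_smul_sum, inner_sum]
        exact Finset.sum_congr rfl fun s hs => real_inner_smul_right θ' s _
      rw [hsums]
      have hterm : ∀ s ∈ SF, 0 ≤ (cθ s:ℝ) * ⟪θ', s⟫ := fun s hs =>
        mul_nonneg (by positivity) (hup s hs)
      have hs₀ : 0 < (cθ s₀:ℝ) * ⟪θ', s₀⟫ := by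
        have hge : (1:ℝ) ≤ (cθ s₀:ℝ) := by exact_mod_cast hcθ1 s₀ hs₀SF
        nlinarith
      calc (0:ℝ) < (cθ s₀:ℝ) * ⟪θ', s₀⟫ := hs₀
        _ ≤ ∑ s ∈ SF, (cθ s:ℝ) * ⟪θ', s⟫ := Finset.single_le_sum hterm hs₀SF
    rcases root_sub_s15 R.toCrystRS (hCΦ (hCpC hθ')) (hCΦ (hCpC hθCp)) hθθC with h1 | h1
    · exact sub_eq_zero.mp h1
    · have hdC : θ' - θC ∈ C := htrick _ h1
        (H.sub_mem (hCH (hCpC hθ')) (hCH (hCpC hθCp)))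
        (Submodule.sub_mem _ (Submodule.subset_span (hCpC hθ'))
          (Submodule.subset_span (hCpC hθCp)))
      rcases hCsplit hdC with h2 | h2
      · exact hθCM θ' hθ' (AddSubmonoid.subset_closure h2)
      · rw [neg_sub] at h2
        exact (hmax θC hθCp (AddSubmonoid.subset_closure h2)).symm
  have hhigh : ∀ β ∈ Cp, θC - β ∈ AddSubmonoid.closure Cp := by
    intro β hβ
    have hMfin : {γ | γ ∈ Cp ∧ γ - β ∈ AddSubmonoid.closure Cp}.Finite :=
      hCpfin.subset fun γ hγ => hγ.1
    have hMne : {γ | γ ∈ Cp ∧ γ - β ∈ AddSubmonoid.closure Cp}.Nonempty :=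
      ⟨β, hβ, by rw [sub_self]; exact AddSubmonoid.zero_mem _⟩
    obtain ⟨γ, hγM, hγmax⟩ := Set.exists_max_image _ g hMfin hMne
    have hγmaximal : ∀ δ ∈ Cp, δ - γ ∈ AddSubmonoid.closure Cp → δ = γ := by
      intro δ hδ hdiff
      by_contra hne
      have hδM : δ ∈ {γ | γ ∈ Cp ∧ γ - β ∈ AddSubmonoid.closure Cp} := ⟨hδ, by
        have hre : δ - β = (δ - γ) + (γ - β) := by abel
        rw [hre]
        exact AddSubmonoid.add_mem _ hdiff hγM.2⟩
      have h1 := hgclCp hdiff (sub_ne_zero.mpr hne)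
      rw [map_sub] at h1
      linarith [hγmax δ hδM]
    have heq := hMaxTheta γ hγM.1 hγmaximal
    rw [← heq]
    exact hγM.2
  have hfsumθ : f θC = (cθ α:ℝ) * f α + ∑ t ∈ SF.erase α, (cθ t:ℝ) * f t := by
    rw [hcθ, map_nat_sum, ← Finset.add_sum_erase _ _ hαSF]
  have h1c : (1:ℝ) ≤ (cθ α:ℝ) := by exact_mod_cast hcθ1 α hαSF
  have htermE : ∀ t ∈ SF.erase α, 0 ≤ (cθ t:ℝ) * f t := fun t ht =>
    mul_nonneg (by positivity) (hf_nonneg (hCpcl (hSFCp (Finset.mem_of_mem_erase ht))))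
  have hfθC1 : f θC = 1 := by
    have hle1 : f θC ≤ 1 := hf_le1 θC (hCΦ (hCpC hθCp))
    have hge : (cθ α:ℝ) ≤ f θC := by
      rw [hfsumθ, hαf, mul_one]
      have := Finset.sum_nonneg htermE
      linarith
    linarith
  have hcθα : cθ α = 1 := by
    have hge : (cθ α:ℝ) ≤ 1 := by
      rw [← hfθC1, hfsumθ, hαf, mul_one]
      have := Finset.sum_nonneg htermE
      linarith
    have : (cθ α:ℝ) = 1 := le_antisymm hge h1c
    exact_mod_cast this
  have huniq : ∀ s ∈ SF, f s = 1 → s = α := by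
    intro s hs hfs
    by_contra hne
    have hsmem : s ∈ SF.erase α := Finset.mem_erase.mpr ⟨hne, hs⟩
    have h2 : (cθ s:ℝ) * f s ≤ ∑ t ∈ SF.erase α, (cθ t:ℝ) * f t :=
      Finset.single_le_sum htermE hsmem
    rw [hfs, mul_one] at h2
    have hs1 : (1:ℝ) ≤ (cθ s:ℝ) := by exact_mod_cast hcθ1 s hs
    rw [hfsumθ, hαf, mul_one] at hfθC1
    linarith
  have hchar : ∀ β ∈ C, f β = 1 → β ∈ Cp ∧ β - α ∈ AddSubmonoid.closure Cp := by
    intro β hβC hβ1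
    have hβCp : β ∈ Cp := ⟨hβC, hf_posmem β (hCΦ hβC) (by rw [hβ1]; norm_num)⟩
    refine ⟨hβCp, ?_⟩
    obtain ⟨d, hd⟩ := hrepS β hβCp
    have hfd : f β = (d α : ℝ) := by
      rw [hd, map_nat_sum, Finset.sum_eq_single α]
      · rw [hαf, mul_one]
      · intro t ht htne
        rcases hf01S t ht with h | h
        · rw [h, mul_zero]
        · exact absurd (huniq t ht h) htne
      · intro h; exact absurd hαSF h
    have hdα : d α = 1 := by
      have : (d α:ℝ) = 1 := by rw [← hfd, hβ1]
      exact_mod_cast this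
    have hsum : β = α + ∑ t ∈ SF.erase α, d t • t := by
      rw [hd, ← Finset.add_sum_erase _ _ hαSF, hdα, one_smul]
    rw [hsum, add_sub_cancel_left]
    exact AddSubmonoid.sum_mem _ fun t ht => AddSubmonoid.nsmul_mem _
      (AddSubmonoid.subset_closure (hSFCp (Finset.mem_of_mem_erase ht))) _
  right
  refine ⟨α, θC, hSF.mp hαSF, hθCp, ?_, ?_, ?_⟩
  · intro β hβ
    exact hhigh β hβ
  · have hsum : θC = α + ∑ t ∈ SF.erase α, cθ t • t := by
      rw [hcθ, ← Finset.add_sum_erase _ _ hαSF, hcθα, one_smul]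
    rw [hsum, add_sub_cancel_left]
    refine Submodule.sum_mem _ fun t ht => ?_
    have htS : t ∈ SimpleOf Cp \ {α} :=
      ⟨hSF.mp (Finset.mem_of_mem_erase ht), (Finset.mem_erase.mp ht).1⟩
    have hz : (cθ t) • t = ((cθ t : ℤ)) • t := (natCast_zsmul t (cθ t)).symm
    rw [hz]
    exact Submodule.smul_mem _ _ (Submodule.subset_span htS)
  · ext β
    constructor
    · rintro ⟨hβI, hβC⟩
      obtain ⟨hβCp, hle⟩ := hchar β hβC ((hI_iff β).mp hβI).2
      exact ⟨hβCp, hle⟩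
    · rintro ⟨hβCp, hle⟩
      have hf1 : f β = 1 := by
        have h2 := hf_nonneg (hclCp (hle : β - α ∈ AddSubmonoid.closure Cp))
        rw [map_sub] at h2
        have h3 := hf_le1 β (hCΦ (hCpC hβCp))
        linarith [hαf]
      exact ⟨(hI_iff β).mpr ⟨hCΦ (hCpC hβCp), hf1⟩, hCpC hβCp⟩
end

section
/- Let I be an abelian ideal of Φ⁺, let β ∈ I be a long root, and γ ∈ I with γ ≠ β. Then β - γ ∈ Φ if and only if (β∨, γ) = 1, and otherwise (β∨, γ) = 0. -/
local notation "⟪" x ", " y "⟫" => @inner ℝ _ _ x y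

private lemma reprAux {E : Type} [NormedAddCommGroup E] [InnerProductSpace ℝ E]
    (s : Finset E) {x : E} (hx : x ∈ AddSubmonoid.closure (s : Set E)) :
    ∃ f : E → ℕ, x = ∑ α ∈ s, (f α : ℝ) • α := by
  classical
  induction hx using AddSubmonoid.closure_induction with
  | mem y hy =>
    refine ⟨fun z => if z = y then 1 else 0, ?_⟩
    have : ∑ α ∈ s, ((if α = y then (1:ℕ) else 0 : ℕ) : ℝ) • α
        = ∑ α ∈ s, (if α = y then ((1:ℝ) • α) else 0) := by
      apply Finset.sum_congr rfl; intro a _; split <;> simp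
    rw [this, Finset.sum_ite_eq' s y (fun α => (1:ℝ) • α)]
    simp [Finset.mem_coe.mp hy]
  | zero => exact ⟨0, by simp⟩
  | add a b _ _ ha hb =>
    obtain ⟨f, hf⟩ := ha; obtain ⟨g, hg⟩ := hb
    exact ⟨f + g, by simp [hf, hg, add_smul, Finset.sum_add_distrib]⟩

private lemma cancelAux {E : Type} [NormedAddCommGroup E] [InnerProductSpace ℝ E]
    (s : Finset E)
    (hind : LinearIndependent ℝ (fun α : {x // x ∈ s} => (α : E)))
    {x : E} (hx : x ∈ AddSubmonoid.closure (s : Set E))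
    (hx' : -x ∈ AddSubmonoid.closure (s : Set E)) : x = 0 := by
  obtain ⟨f, hf⟩ := reprAux s hx
  obtain ⟨g, hg⟩ := reprAux s hx'
  have hsum : ∑ α : {x // x ∈ s}, ((f α + g α : ℝ)) • (α : E) = 0 := by
    rw [Finset.sum_coe_sort s (fun α => ((f α + g α : ℝ)) • α)]
    have h0 : (∑ α ∈ s, (f α : ℝ) • α) + (∑ α ∈ s, (g α : ℝ) • α) = 0 := by
      rw [← hf, ← hg]; simp
    rw [← Finset.sum_add_distrib] at h0
    rw [← h0]
    exact Finset.sum_congr rfl (fun a _ => by rw [add_smul])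
  have hz := Fintype.linearIndependent_iff.mp hind (fun α => (f α + g α : ℝ)) hsum
  have hall : ∀ α ∈ s, (f α : ℝ) = 0 := by
    intro α hα
    have h : (f α : ℝ) + g α = 0 := hz ⟨α, hα⟩
    have h1 : (0:ℝ) ≤ f α := Nat.cast_nonneg _
    have h2 : (0:ℝ) ≤ g α := Nat.cast_nonneg _
    linarith
  rw [hf]
  exact Finset.sum_eq_zero (fun α hα => by rw [hall α hα, zero_smul])

private lemma eqAux {E : Type} [NormedAddCommGroup E] [InnerProductSpace ℝ E]
    {x y : E} (h : ‖x - y‖ ^ 2 ≤ 0) : x = y := by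
  have h0 : ‖x - y‖ = 0 := by nlinarith [norm_nonneg (x - y)]
  rwa [norm_eq_zero, sub_eq_zero] at h0

theorem statement16 {E : Type} [NormedAddCommGroup E] [InnerProductSpace ℝ E] (R : BasedRS E) (hirr : R.toCrystRS.Irred)
    (I : Set E) (hI : R.IsAbelianIdeal I)
    (β γ : E) (hβ : β ∈ I) (hlong : R.IsLong β) (hγ : γ ∈ I) (hne : γ ≠ β) :
    (β - γ ∈ R.roots ↔ 2 * ⟪γ, β⟫ / ⟪β, β⟫ = 1) ∧
    (β - γ ∉ R.roots → 2 * ⟪γ, β⟫ / ⟪β, β⟫ = 0) := by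
  obtain ⟨hIpos, hIup, hIab⟩ := hI
  have hβr : β ∈ R.roots := (hIpos hβ).1
  have hγr : γ ∈ R.roots := (hIpos hγ).1
  have hβ0 : β ≠ 0 := R.nonzero β hβr
  have hγ0 : γ ≠ 0 := R.nonzero γ hγr
  have hββ : (0:ℝ) < ⟪β, β⟫ := by
    rw [real_inner_self_eq_norm_sq]; exact pow_pos (norm_pos_iff.mpr hβ0) 2
  obtain ⟨n, hn⟩ := R.cartan γ hγr β hβr
  have hc : 2 * ⟪γ, β⟫ / ⟪β, β⟫ = (n : ℝ) := by
    rw [hn]; field_simp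
  have hβn : ⟪β, β⟫ = ‖β‖ ^ 2 := real_inner_self_eq_norm_sq β
  have hγn : ⟪γ, γ⟫ = ‖γ‖ ^ 2 := real_inner_self_eq_norm_sq γ
  have hlen : ‖γ‖ ≤ ‖β‖ := hlong.2 γ hγr
  -- n ≤ 1
  have hle1 : n ≤ 1 := by
    by_contra h
    push_neg at h
    have h2 : (2:ℝ) ≤ (n:ℝ) := by exact_mod_cast h
    apply hne
    apply eqAux
    rw [norm_sub_sq_real]
    nlinarith [norm_nonneg γ, norm_nonneg β]
  -- n ≥ 0
  have hge0 : 0 ≤ n := by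
    by_contra h
    push_neg at h
    by_cases h1 : n = -1
    · have hr := R.reflect γ hγr β hβr
      have he : γ - (2 * ⟪γ, β⟫ / ⟪β, β⟫) • β = β + γ := by
        rw [hc, h1]; push_cast; module
      rw [he] at hr
      exact hIab β hβ γ hγ hr
    · have hn2 : n ≤ -2 := by omega
      have h2 : (n:ℝ) ≤ -2 := by exact_mod_cast hn2
      have hγβ : γ = -β := by
        apply eqAux
        rw [sub_neg_eq_add, norm_add_sq_real]
        nlinarith [norm_nonneg γ, norm_nonneg β]
      apply hβ0
      apply cancelAux R.simple R.simple_indep (hIpos hβ).2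
      rw [← hγβ]
      exact (hIpos hγ).2
  -- n = 1 → β - γ ∈ roots
  have key1 : (n:ℝ) = 1 → β - γ ∈ R.roots := by
    intro h1
    have hr := R.reflect γ hγr β hβr
    have he : γ - (2 * ⟪γ, β⟫ / ⟪β, β⟫) • β = γ - β := by
      rw [hc, h1, one_smul]
    rw [he] at hr
    have := R.neg_mem _ hr
    rwa [neg_sub] at this
  -- n = 0 → β - γ ∉ roots
  have key0 : n = 0 → β - γ ∈ R.roots → False := by
    intro h0 hδ
    have hip : ⟪γ, β⟫ = 0 := by
      rw [h0] at hn; push_cast at hn; linarith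
    have hδlen : ‖β - γ‖ ≤ ‖β‖ := hlong.2 _ hδ
    have hδβ : ⟪β - γ, β⟫ = ⟪β, β⟫ := by
      rw [inner_sub_left, hip]; ring
    have : β - γ = β := by
      apply eqAux
      rw [norm_sub_sq_real, hδβ]
      nlinarith [norm_nonneg (β - γ), norm_nonneg β]
    exact hγ0 (by rwa [sub_eq_self] at this)
  have hn01 : n = 0 ∨ n = 1 := by omega
  constructor
  · constructor
    · intro hδ
      rcases hn01 with h | h
      · exact (key0 h hδ).elim
      · rw [hc, h]; norm_num
    · intro h1
      exact key1 (by rw [← hc, h1])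
  · intro hδ
    rcases hn01 with h | h
    · rw [hc, h]; norm_num
    · exact (hδ (key1 (by rw [h]; norm_num))).elim
end

section
/- Let Φ be a finite irreducible crystallographic root system with highest root θ. The root polytope P(Φ) = conv(Φ) equals the convex hull of the long roots of Φ. -/
local notation "⟪" x ", " y "⟫" => @inner ℝ _ _ x y

private lemma selfpos {E : Type} [NormedAddCommGroup E] [InnerProductSpace ℝ E]
    {x : E} (hx : x ≠ 0) : (0:ℝ) < ⟪x, x⟫ := by
  rw [real_inner_self_eq_norm_sq]
  have h : 0 < ‖x‖ := norm_pos_iff.2 hx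
  positivity

private lemma convA {E : Type} [NormedAddCommGroup E] [InnerProductSpace ℝ E]
    (R : CrystRS E) {b γ : E} (hb : b ∈ R.roots) (hγr : γ ∈ R.roots)
    (hγmax : ∀ δ ∈ R.roots, ‖δ‖ ≤ ‖γ‖) (hpos : 0 < ⟪b, γ⟫) :
    b ∈ convexHull ℝ {β ∈ R.roots | ∀ δ ∈ R.roots, ‖δ‖ ≤ ‖β‖} := by
  classical
  set L : Set E := {β ∈ R.roots | ∀ δ ∈ R.roots, ‖δ‖ ≤ ‖β‖} with hLdef
  by_cases hbL : b ∈ L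
  · exact subset_convexHull ℝ L hbL
  have hlt : ‖b‖ < ‖γ‖ := by
    have : ¬ ∀ δ ∈ R.roots, ‖δ‖ ≤ ‖b‖ := fun h => hbL ⟨hb, h⟩
    push_neg at this
    obtain ⟨δ, hδ, hδb⟩ := this
    exact lt_of_lt_of_le hδb (hγmax δ hδ)
  have hb0 : (0:ℝ) < ⟪b, b⟫ := selfpos (R.nonzero b hb)
  have hγ0 : (0:ℝ) < ⟪γ, γ⟫ := selfpos (R.nonzero γ hγr)
  have hbblt : ⟪b, b⟫ < ⟪γ, γ⟫ := by
    rw [real_inner_self_eq_norm_sq, real_inner_self_eq_norm_sq]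
    have := norm_nonneg b
    nlinarith
  obtain ⟨p, hp⟩ := R.cartan γ hγr b hb
  obtain ⟨q, hq⟩ := R.cartan b hb γ hγr
  have hcomm : ⟪b, γ⟫ = ⟪γ, b⟫ := real_inner_comm γ b
  have hqpos : (0:ℝ) < (q:ℝ) := by
    by_contra h
    push_neg at h
    nlinarith
  have hppos : (0:ℝ) < (p:ℝ) := by
    by_contra h
    push_neg at h
    nlinarith
  have hpq : (q:ℝ) < (p:ℝ) := by
    nlinarith
  have hp2 : (2:ℝ) ≤ (p:ℝ) := by
    have h1 : (0:ℤ) < q := by exact_mod_cast hqpos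
    have h2 : q < p := by exact_mod_cast hpq
    have : (2:ℤ) ≤ p := by omega
    exact_mod_cast this
  have hp0 : (p:ℝ) ≠ 0 := by linarith
  have hscal : 2 * ⟪γ, b⟫ / ⟪b, b⟫ = (p:ℝ) := by
    rw [hp]; field_simp
  have hroot : (p:ℝ) • b - γ ∈ R.roots := by
    have h1 := R.reflect γ hγr b hb
    rw [hscal] at h1
    have h2 := R.neg_mem _ h1
    simpa [neg_sub] using h2
  have hnorm : ‖(p:ℝ) • b - γ‖ = ‖γ‖ := by
    have hinner : ⟪(p:ℝ) • b - γ, (p:ℝ) • b - γ⟫ = ⟪γ, γ⟫ := by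
      simp only [inner_sub_left, inner_sub_right, real_inner_smul_left,
        real_inner_smul_right]
      linear_combination (-(p:ℝ)) * hp - (p:ℝ) * hcomm
    rw [norm_eq_sqrt_real_inner, norm_eq_sqrt_real_inner, hinner]
  have hx₂L : (p:ℝ) • b - γ ∈ L :=
    ⟨hroot, fun δ hδ => (hγmax δ hδ).trans_eq hnorm.symm⟩
  have hnegγL : -γ ∈ L := ⟨R.neg_mem γ hγr, fun δ hδ => by
    simpa using hγmax δ hδ⟩
  have hγL : γ ∈ L := ⟨hγr, hγmax⟩
  have hw : (2/(p:ℝ)) • ((p:ℝ) • b - γ) + (((p:ℝ)-2)/(p:ℝ)) • (-γ) ∈ convexHull ℝ L := by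
    refine (convex_convexHull ℝ L) (subset_convexHull ℝ L hx₂L)
      (subset_convexHull ℝ L hnegγL) (by positivity) ?_ ?_
    · have : (0:ℝ) ≤ (p:ℝ) - 2 := by linarith
      positivity
    · field_simp
      ring
  have key : b = (1/2 : ℝ) • γ +
      (1/2 : ℝ) • ((2/(p:ℝ)) • ((p:ℝ) • b - γ) + (((p:ℝ)-2)/(p:ℝ)) • (-γ)) := by
    match_scalars
    · field_simp
    · field_simp
      ring
  rw [key]
  exact (convex_convexHull ℝ L) (subset_convexHull ℝ L hγL) hw
    (by norm_num) (by norm_num) (by norm_num)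

private lemma convB {E : Type} [NormedAddCommGroup E] [InnerProductSpace ℝ E]
    (R : CrystRS E) {b : E} (hb : b ∈ R.roots)
    (hne : ∃ γ ∈ {β ∈ R.roots | ∀ δ ∈ R.roots, ‖δ‖ ≤ ‖β‖}, ⟪b, γ⟫ ≠ 0) :
    b ∈ convexHull ℝ {β ∈ R.roots | ∀ δ ∈ R.roots, ‖δ‖ ≤ ‖β‖} := by
  obtain ⟨γ, ⟨hγr, hγmax⟩, hγ0⟩ := hne
  rcases lt_or_gt_of_ne hγ0 with h | h
  · have hpos : 0 < ⟪b, -γ⟫ := by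
      rw [inner_neg_right]; linarith
    exact convA R hb (R.neg_mem γ hγr) (fun δ hδ => by simpa using hγmax δ hδ) hpos
  · exact convA R hb hγr hγmax h

theorem statement19 {E : Type} [NormedAddCommGroup E] [InnerProductSpace ℝ E] (R : CrystRS E) (hirr : R.Irred) :
    convexHull ℝ R.roots =
      convexHull ℝ {β ∈ R.roots | ∀ γ ∈ R.roots, ‖γ‖ ≤ ‖β‖} := by
  classical
  refine le_antisymm ?_ (convexHull_mono (fun x hx => hx.1))
  rcases R.roots.eq_empty_or_nonempty with hemp | hne
  · simp [hemp]
  set L : Set E := {β ∈ R.roots | ∀ γ ∈ R.roots, ‖γ‖ ≤ ‖β‖} with hLdef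
  obtain ⟨θ, hθr, hθmax⟩ := Set.exists_max_image R.roots (fun x => ‖x‖) R.finite hne
  refine convexHull_min (fun b hb => ?_) (convex_convexHull ℝ L)
  -- decompose roots into A (non-orthogonal to some long root) and B
  set A : Set E := {a ∈ R.roots | ∃ γ ∈ L, ⟪a, γ⟫ ≠ 0} with hAdef
  set B : Set E := {a ∈ R.roots | ∀ γ ∈ L, ⟪a, γ⟫ = 0} with hBdef
  have hunion : R.roots = A ∪ B := by
    ext x
    constructor
    · intro hx
      by_cases h : ∀ γ ∈ L, ⟪x, γ⟫ = 0
      · exact Or.inr ⟨hx, h⟩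
      · push_neg at h
        exact Or.inl ⟨hx, h⟩
    · rintro (hx | hx) <;> exact hx.1
  have horth : ∀ a ∈ A, ∀ b ∈ B, ⟪a, b⟫ = 0 := by
    rintro a ⟨har, hane⟩ c ⟨hcr, hcorth⟩
    have haconv : a ∈ convexHull ℝ L := convB R har hane
    have hK : convexHull ℝ L ⊆ {x : E | ⟪x, c⟫ = 0} := by
      refine convexHull_min (fun γ hγ => ?_) ?_
      · have := hcorth γ hγ
        rw [real_inner_comm] at this
        exact this
      · intro x hx y hy s t _ _ _
        simp only [Set.mem_setOf_eq] at hx hy ⊢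
        rw [inner_add_left, real_inner_smul_left, real_inner_smul_left, hx, hy]
        ring
    exact hK haconv
  rcases hirr A B hunion horth with hA | hB
  · exfalso
    have hθA : θ ∈ A := ⟨hθr, θ, ⟨hθr, hθmax⟩, by
      exact ne_of_gt (selfpos (R.nonzero θ hθr))⟩
    rw [hA] at hθA
    exact hθA
  · have hbA : b ∈ A := by
      have := hunion ▸ hb
      rcases this with h | h
      · exact h
      · rw [hB] at h; exact h.elim
    exact convB R hbA.1 hbA.2
end
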